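/- arXiv:1909.02854 — 2 statements merged into one kernel-verified Lean document; each statement's English description precedes it below -/
import Mathlib

section
/- Let Ω be an r.e. infinite set, P a discrete probability space on Ω, and B ⊆ Ω a recursive event with P(B) > 0. If α is Martin-Löf P-random, then the sequence Filtered_B(α), obtained from α by deleting all elements not in B, is Martin-Löf P_B-random, where P_B(a) := P({a})/P(B) for a ∈ B. (Closure of ensembles under conditioning.) -/
open scoped ENNReal

/-- A set of finite strings is prefix-free. -/
def prefixFree {Γ : Type*} (E : Set (List Γ)) : Prop :=
  ∀ σ ∈ E, ∀ τ ∈ E, σ <+: τ → σ = τ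

/-- The prefix of length `n` of an infinite sequence. -/
def pre {Γ : Type*} (α : ℕ → Γ) (n : ℕ) : List Γ := List.ofFn fun i : Fin n => α i

/-- The open set generated by a set of strings: sequences having some prefix in `S`. -/
def cyl {Γ : Type*} (S : Set (List Γ)) : Set (ℕ → Γ) := {α | ∃ n, pre α n ∈ S}

/-- The (generalized) Bernoulli probability of a finite string:
`P(σ₁)···P(σₙ)`. -/
def strP {Γ : Type*} (P : Γ → ℝ) (σ : List Γ) : ℝ := (σ.map P).prod

/-- The `λ_P`-measure of the open set generated by a prefix-free set `S`. -/
noncomputable def mOpen {Γ : Type*} (P : Γ → ℝ) (S : Set (List Γ)) : ℝ≥0∞ :=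
  ∑' σ : S, ENNReal.ofReal (strP P (σ : List Γ))

/-- All symbols of the string belong to the alphabet `O`. -/
def strIn {Γ : Type*} (O : Set Γ) (σ : List Γ) : Prop := ∀ a ∈ σ, a ∈ O

/-- All symbols of the sequence belong to the alphabet `O`. -/
def seqIn {Γ : Type*} (O : Set Γ) (α : ℕ → Γ) : Prop := ∀ n, α n ∈ O

/-- `P` is a discrete probability space on the alphabet `O`. -/
def isProb {Γ : Type*} (O : Set Γ) (P : Γ → ℝ) : Prop :=
  (∀ a ∈ O, 0 ≤ P a) ∧ HasSum (fun a : O => P (a : Γ)) 1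

/-- The combinatorial conditions on a Martin-Löf `P`-test: sections consist of strings
over the alphabet, are prefix-free, and have `λ_P`-measure `< 2⁻ⁿ`. -/
def isTestSet {Γ : Type*} (O : Set Γ) (P : Γ → ℝ) (C : Set (ℕ × List Γ)) : Prop :=
  (∀ x ∈ C, strIn O x.2) ∧
  ∀ n : ℕ, 1 ≤ n → prefixFree {σ | (n, σ) ∈ C} ∧
    mOpen P {σ | (n, σ) ∈ C} < (2 : ℝ≥0∞)⁻¹ ^ n

/-- A Martin-Löf `P`-test: an r.e. subset of `ℕ⁺ × Ω*` satisfying the test conditions. -/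
def MLTest {Γ : Type*} [Primcodable Γ] (O : Set Γ) (P : Γ → ℝ)
    (C : Set (ℕ × List Γ)) : Prop :=
  REPred (· ∈ C) ∧ isTestSet O P C

/-- `α` is Martin-Löf `P`-random: it passes every Martin-Löf `P`-test. -/
def MLRandom {Γ : Type*} [Primcodable Γ] (O : Set Γ) (P : Γ → ℝ) (α : ℕ → Γ) : Prop :=
  ∀ C : Set (ℕ × List Γ), MLTest O P C → ∃ n, 1 ≤ n ∧ α ∉ cyl {σ | (n, σ) ∈ C}


open Nat.Partrec (Code)
open Nat.Partrec.Code

/-- Every r.e. predicate is an increasing union of computable predicates. -/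
lemma re_iff_exists_mono {α} [Primcodable α] {p : α → Prop} (hp : REPred p) :
    ∃ g : α → ℕ → Bool, Primrec₂ g ∧ (∀ a n m, n ≤ m → g a n = true → g a m = true) ∧
      ∀ a, p a ↔ ∃ n, g a n = true := by
  unfold REPred Partrec at hp
  obtain ⟨c, hc⟩ := exists_code.1 hp
  refine ⟨fun a n => (evaln n c (Encodable.encode a)).isSome, ?_, ?_, ?_⟩
  · have h1 : Primrec fun x : α × ℕ => evaln x.2 c (Encodable.encode x.1) :=
      primrec_evaln.comp ((Primrec.pair (Primrec.pair Primrec.snd (Primrec.const c))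
        (Primrec.encode.comp Primrec.fst)))
    exact (Primrec.option_isSome.comp h1).to₂
  · intro a n m hnm h
    rw [Option.isSome_iff_exists] at h ⊢
    obtain ⟨x, hx⟩ := h
    exact ⟨x, evaln_mono hnm hx⟩
  · intro a
    have hdom : p a ↔ (eval c (Encodable.encode a)).Dom := by
      rw [hc]
      simp [Encodable.encodek, Part.dom_iff_mem]
    rw [hdom, Part.dom_iff_mem]
    constructor
    · rintro ⟨x, hx⟩
      obtain ⟨k, hk⟩ := evaln_complete.1 hx
      exact ⟨k, Option.isSome_iff_exists.2 ⟨x, hk⟩⟩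
    · rintro ⟨n, hn⟩
      obtain ⟨x, hx⟩ := Option.isSome_iff_exists.1 hn
      exact ⟨x, evaln_sound hx⟩

/-- A predicate of the form `∃ n, g a n` with computable `g` is r.e. -/
lemma re_of_exists_bool {α} [Primcodable α] {g : α → ℕ → Bool} (hg : Computable₂ g) :
    REPred fun a => ∃ n, g a n = true := by
  have h : Partrec fun a => Nat.rfind fun n => (g a n : Part Bool) :=
    Partrec.rfind (hg.partrec₂)
  have := h.dom_re
  apply this.of_eq
  intro a
  refine Iff.trans Nat.rfind_dom ?_
  constructor
  · rintro ⟨n, h1, -⟩; exact ⟨n, by simpa using h1⟩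
  · rintro ⟨n, hn⟩
    obtain ⟨m, hm, -⟩ := Nat.rfind_min' (p := fun n => g a n) hn
    exact ⟨m, by simpa using Nat.rfind_spec hm, fun {k} hk => trivial⟩

section boolaux

/-- Conjunction over a list, as a foldr. -/
def bAll (f : ℕ → Bool) (l : List ℕ) : Bool := l.foldr (fun a r => f a && r) true

lemma bAll_iff (f : ℕ → Bool) (l : List ℕ) : bAll f l = true ↔ ∀ a ∈ l, f a = true := by
  induction l with
  | nil => simp [bAll]
  | cons a t ih => simp [bAll] at ih ⊢; tauto

/-- Filtering a list, as a foldr. -/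
def bFilt (f : ℕ → Bool) (l : List ℕ) : List ℕ :=
  l.foldr (fun a r => bif f a then a :: r else r) []

lemma bFilt_eq (f : ℕ → Bool) (l : List ℕ) : bFilt f l = l.filter f := by
  induction l with
  | nil => rfl
  | cons a t ih =>
    simp only [bFilt, List.foldr_cons, List.filter_cons] at ih ⊢
    rw [ih]; cases f a <;> simp

/-- Test on the last element of a list (`true` on the empty list). -/
def bLast (f : ℕ → Bool) (l : List ℕ) : Bool := (l.reverse.head?).elim true f

lemma bLast_eq (f : ℕ → Bool) (l : List ℕ) : bLast f l = l.getLast?.elim true f := by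
  rw [bLast, List.head?_reverse]

lemma exists_stage_all {f : ℕ → ℕ → Bool}
    (hmono : ∀ a n m, n ≤ m → f a n = true → f a m = true) (l : List ℕ)
    (h : ∀ a ∈ l, ∃ n, f a n = true) : ∃ n, ∀ a ∈ l, f a n = true := by
  induction l with
  | nil => exact ⟨0, by simp⟩
  | cons a t ih =>
    obtain ⟨n1, hn1⟩ := ih (fun a ha => h a (List.mem_cons_of_mem _ ha))
    obtain ⟨n2, hn2⟩ := h a (List.mem_cons_self)
    refine ⟨max n1 n2, ?_⟩
    intro b hb
    rcases List.mem_cons.1 hb with rfl | hb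
    · exact hmono _ _ _ (le_max_right _ _) hn2
    · exact hmono _ _ _ (le_max_left _ _) (hn1 b hb)

lemma primrec_band : Primrec₂ (· && ·) :=
  (Primrec.cond Primrec.fst Primrec.snd (Primrec.const false)).to₂.of_eq fun a b => by
    cases a <;> rfl

lemma primrec_bor : Primrec₂ (· || ·) :=
  (Primrec.cond Primrec.fst (Primrec.const true) Primrec.snd).to₂.of_eq fun a b => by
    cases a <;> rfl

end boolaux

section primrecaux

variable {α : Type*} [Primcodable α]

lemma primrec_bAll {g : α → ℕ → Bool} (hg : Primrec₂ g) (l : α → List ℕ)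
    (hl : Primrec l) : Primrec fun a => bAll (g a) (l a) :=
  Primrec.list_foldr hl (Primrec.const true) <|
    (primrec_band.comp (hg.comp Primrec.fst (Primrec.fst.comp Primrec.snd))
      (Primrec.snd.comp Primrec.snd)).to₂

lemma primrec_bFilt {g : α → ℕ → Bool} (hg : Primrec₂ g) (l : α → List ℕ)
    (hl : Primrec l) : Primrec fun a => bFilt (g a) (l a) :=
  Primrec.list_foldr hl (Primrec.const []) <|
    (Primrec.cond (hg.comp Primrec.fst (Primrec.fst.comp Primrec.snd))
      (Primrec.list_cons.comp (Primrec.fst.comp Primrec.snd) (Primrec.snd.comp Primrec.snd))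
      (Primrec.snd.comp Primrec.snd)).to₂

lemma primrec_bLast {g : α → ℕ → Bool} (hg : Primrec₂ g) (l : α → List ℕ)
    (hl : Primrec l) : Primrec fun a => bLast (g a) (l a) :=
  (Primrec.option_casesOn (Primrec.list_head?.comp (Primrec.list_reverse.comp hl))
    (Primrec.const true) hg).of_eq fun a => by
      unfold bLast; cases (l a).reverse.head? <;> rfl

end primrecaux

/-- The transferred test set is r.e. -/
lemma main_re (Ω B : Set ℕ) (C : Set (ℕ × List ℕ)) (hre : REPred (· ∈ Ω))
    (hBrec : ComputablePred (· ∈ B)) (hC : REPred (· ∈ C))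
    (fB : ℕ → Bool) (hfB : ∀ a, a ∈ B ↔ fB a = true) :
    REPred fun x : ℕ × List ℕ =>
      (∀ a ∈ x.2, a ∈ Ω) ∧ (x.1, x.2.filter fB) ∈ C ∧ x.2.getLast?.elim True (· ∈ B) := by
  obtain ⟨gΩ, hgΩp, hgΩm, hgΩ⟩ := re_iff_exists_mono hre
  obtain ⟨gB, hgBp, hgBm, hgB⟩ := re_iff_exists_mono hBrec.to_re
  obtain ⟨gB', hgB'p, hgB'm, hgB'⟩ := re_iff_exists_mono hBrec.not.to_re
  obtain ⟨gC, hgCp, hgCm, hgC⟩ := re_iff_exists_mono hC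
  -- the stage-`n` approximation
  set H : ℕ × List ℕ → ℕ → Bool := fun x n =>
    bAll (fun a => (gB a n || gB' a n) && gΩ a n) x.2 &&
      (gC (x.1, bFilt (fun a => gB a n) x.2) n && bLast (fun a => gB a n) x.2) with hH
  have key : ∀ x : ℕ × List ℕ,
      ((∀ a ∈ x.2, a ∈ Ω) ∧ (x.1, x.2.filter fB) ∈ C ∧ x.2.getLast?.elim True (· ∈ B))
        ↔ ∃ n, H x n = true := by
    intro x
    constructor
    · rintro ⟨h1, h2, h3⟩
      obtain ⟨n1, hn1⟩ := exists_stage_all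
        (f := fun a n => (gB a n || gB' a n) && gΩ a n)
        (fun a n m hnm h => by
          simp only [Bool.and_eq_true, Bool.or_eq_true] at h ⊢
          exact ⟨h.1.imp (hgBm a n m hnm) (hgB'm a n m hnm), hgΩm a n m hnm h.2⟩)
        x.2
        (fun a ha => by
          obtain ⟨nΩ, hnΩ⟩ := (hgΩ a).1 (h1 a ha)
          by_cases hB : a ∈ B
          · obtain ⟨nB, hnB⟩ := (hgB a).1 hB
            exact ⟨max nB nΩ, by
              simp only [Bool.and_eq_true, Bool.or_eq_true]
              exact ⟨Or.inl (hgBm a nB _ (le_max_left _ _) hnB),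
                hgΩm a nΩ _ (le_max_right _ _) hnΩ⟩⟩
          · obtain ⟨nB, hnB⟩ := (hgB' a).1 hB
            exact ⟨max nB nΩ, by
              simp only [Bool.and_eq_true, Bool.or_eq_true]
              exact ⟨Or.inr (hgB'm a nB _ (le_max_left _ _) hnB),
                hgΩm a nΩ _ (le_max_right _ _) hnΩ⟩⟩)
      obtain ⟨n2, hn2⟩ := (hgC _).1 h2
      -- stage for the last element
      obtain ⟨n3, hn3⟩ : ∃ n3, bLast (fun a => gB a n3) x.2 = true := by
        rcases hx : x.2.getLast? with - | b
        · exact ⟨0, by simp [bLast_eq, hx]⟩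
        · rw [hx] at h3
          obtain ⟨nB, hnB⟩ := (hgB b).1 h3
          exact ⟨nB, by simp [bLast_eq, hx, hnB]⟩
      refine ⟨max n1 (max n2 n3), ?_⟩
      set n := max n1 (max n2 n3) with hn
      have hdec : ∀ a ∈ x.2, ((gB a n || gB' a n) && gΩ a n) = true := fun a ha => by
        have := hn1 a ha
        simp only [Bool.and_eq_true, Bool.or_eq_true] at this ⊢
        exact ⟨this.1.imp (hgBm a n1 n (le_max_left _ _)) (hgB'm a n1 n (le_max_left _ _)),
          hgΩm a n1 n (le_max_left _ _) this.2⟩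
      have hfilt : bFilt (fun a => gB a n) x.2 = x.2.filter fB := by
        rw [bFilt_eq]
        apply List.filter_congr
        intro a ha
        have := hdec a ha
        simp only [Bool.and_eq_true, Bool.or_eq_true] at this
        rcases this.1 with h | h
        · rw [h]
          exact ((hfB a).1 ((hgB a).2 ⟨n, h⟩)).symm
        · have hnB : a ∉ B := (hgB' a).2 ⟨n, h⟩
          have hf : fB a = false := by
            rcases hfa : fB a with - | -
            · rfl
            · exact absurd ((hfB a).2 hfa) hnB
          rw [hf]
          rcases hga : gB a n with - | -
          · rfl
          · exact absurd ((hgB a).2 ⟨n, hga⟩) hnB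
      rw [hH]
      simp only [Bool.and_eq_true]
      refine ⟨(bAll_iff _ _).2 hdec, ?_, ?_⟩
      · rw [hfilt]
        exact hgCm _ n2 n (le_trans (le_max_left _ _) (le_max_right _ _)) hn2
      · rcases hx : x.2.getLast? with - | b
        · simp [bLast_eq, hx]
        · simp only [bLast_eq, hx, Option.elim] at hn3 ⊢
          exact hgBm b n3 n (le_trans (le_max_right _ _) (le_max_right _ _)) hn3
    · rintro ⟨n, hn⟩
      rw [hH] at hn
      simp only [Bool.and_eq_true] at hn
      obtain ⟨hall, hC2, hlast⟩ := hn
      have hdec := (bAll_iff _ _).1 hall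
      have hΩ : ∀ a ∈ x.2, a ∈ Ω := fun a ha => by
        have := hdec a ha
        simp only [Bool.and_eq_true] at this
        exact (hgΩ a).2 ⟨n, this.2⟩
      have hfilt : bFilt (fun a => gB a n) x.2 = x.2.filter fB := by
        rw [bFilt_eq]
        apply List.filter_congr
        intro a ha
        have := hdec a ha
        simp only [Bool.and_eq_true, Bool.or_eq_true] at this
        rcases this.1 with h | h
        · rw [h]
          exact ((hfB a).1 ((hgB a).2 ⟨n, h⟩)).symm
        · have hnB : a ∉ B := (hgB' a).2 ⟨n, h⟩
          have hf : fB a = false := by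
            rcases hfa : fB a with - | -
            · rfl
            · exact absurd ((hfB a).2 hfa) hnB
          rw [hf]
          rcases hga : gB a n with - | -
          · rfl
          · exact absurd ((hgB a).2 ⟨n, hga⟩) hnB
      refine ⟨hΩ, by rw [hfilt] at hC2; exact (hgC _).2 ⟨n, hC2⟩, ?_⟩
      rcases hx : x.2.getLast? with - | b
      · simp
      · simp only [bLast_eq, hx, Option.elim] at hlast
        exact (hgB b).2 ⟨n, hlast⟩
  have hHp : Primrec₂ H := by
    rw [hH]
    have pl : Primrec fun p : (ℕ × List ℕ) × ℕ => p.1.2 := Primrec.snd.comp Primrec.fst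
    have hg1 : Primrec₂ fun (p : (ℕ × List ℕ) × ℕ) (a : ℕ) =>
        (gB a p.2 || gB' a p.2) && gΩ a p.2 :=
      (primrec_band.comp
        (primrec_bor.comp (hgBp.comp Primrec.snd (Primrec.snd.comp Primrec.fst))
          (hgB'p.comp Primrec.snd (Primrec.snd.comp Primrec.fst)))
        (hgΩp.comp Primrec.snd (Primrec.snd.comp Primrec.fst))).to₂
    have hg2 : Primrec₂ fun (p : (ℕ × List ℕ) × ℕ) (a : ℕ) => gB a p.2 :=
      (hgBp.comp Primrec.snd (Primrec.snd.comp Primrec.fst)).to₂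
    have t1 : Primrec fun p : (ℕ × List ℕ) × ℕ =>
        bAll (fun a => (gB a p.2 || gB' a p.2) && gΩ a p.2) p.1.2 :=
      primrec_bAll hg1 _ pl
    have t2 : Primrec fun p : (ℕ × List ℕ) × ℕ =>
        gC (p.1.1, bFilt (fun a => gB a p.2) p.1.2) p.2 :=
      hgCp.comp
        (Primrec.pair (Primrec.fst.comp Primrec.fst)
          (primrec_bFilt hg2 _ pl))
        Primrec.snd
    have t3 : Primrec fun p : (ℕ × List ℕ) × ℕ =>
        bLast (fun a => gB a p.2) p.1.2 :=
      primrec_bLast hg2 _ pl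
    exact (primrec_band.comp t1 (primrec_band.comp t2 t3)).to₂
  exact (re_of_exists_bool hHp.to_comp).of_eq fun x => (key x).symm




section measureaux

variable {P : ℕ → ℝ}

lemma strP_nil : strP P ([] : List ℕ) = 1 := rfl

lemma strP_cons (a : ℕ) (σ : List ℕ) : strP P (a :: σ) = P a * strP P σ := by
  simp [strP]

lemma strP_append (ρ σ : List ℕ) : strP P (ρ ++ σ) = strP P ρ * strP P σ := by
  simp [strP]

lemma strP_nonneg {Ω : Set ℕ} (hP : ∀ a ∈ Ω, 0 ≤ P a) {σ : List ℕ}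
    (hσ : ∀ a ∈ σ, a ∈ Ω) : 0 ≤ strP P σ := by
  induction σ with
  | nil => norm_num [strP_nil]
  | cons a t ih =>
    rw [strP_cons]
    exact mul_nonneg (hP a (hσ a (List.mem_cons_self)))
      (ih fun b hb => hσ b (List.mem_cons_of_mem _ hb))

lemma ofReal_strP_cons {a : ℕ} (ha : 0 ≤ P a) (σ : List ℕ) :
    ENNReal.ofReal (strP P (a :: σ)) = ENNReal.ofReal (P a) * ENNReal.ofReal (strP P σ) := by
  rw [strP_cons, ENNReal.ofReal_mul ha]

lemma ofReal_strP_append {ρ : List ℕ} (hρ : 0 ≤ strP P ρ) (σ : List ℕ) :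
    ENNReal.ofReal (strP P (ρ ++ σ))
      = ENNReal.ofReal (strP P ρ) * ENNReal.ofReal (strP P σ) := by
  rw [strP_append, ENNReal.ofReal_mul hρ]

/-- conditional string probability -/
lemma ofReal_strP_div {pB : ℝ} (hpB : 0 < pB) {Ω : Set ℕ} (hP : ∀ a ∈ Ω, 0 ≤ P a)
    (σ : List ℕ) (hσ : ∀ a ∈ σ, a ∈ Ω) :
    ENNReal.ofReal (strP (fun a => P a / pB) σ)
      = ENNReal.ofReal (strP P σ) * ((ENNReal.ofReal pB)⁻¹) ^ σ.length := by
  induction σ with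
  | nil => simp [strP_nil]
  | cons a t ih =>
    have ha : 0 ≤ P a := hP a (hσ a (List.mem_cons_self))
    have ha' : (0:ℝ) ≤ P a / pB := div_nonneg ha hpB.le
    rw [ofReal_strP_cons ha', ofReal_strP_cons ha,
      ih fun b hb => hσ b (List.mem_cons_of_mem _ hb),
      ENNReal.ofReal_div_of_pos hpB]
    rw [List.length_cons, pow_succ, ENNReal.div_eq_inv_mul]
    ring

/-- Sum of weights over all strings of length `n` over an alphabet `D`. -/
lemma sum_len_le (D : Set ℕ) (hPD : ∀ a ∈ D, 0 ≤ P a) (n : ℕ) :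
    ∑' ρ : {ρ : List ℕ | (∀ a ∈ ρ, a ∈ D) ∧ ρ.length = n}, ENNReal.ofReal (strP P ρ)
      ≤ (∑' a : D, ENNReal.ofReal (P a)) ^ n := by
  induction n with
  | zero =>
    have hsub : {ρ : List ℕ | (∀ a ∈ ρ, a ∈ D) ∧ ρ.length = 0} ⊆ {([] : List ℕ)} := by
      rintro ρ ⟨-, h⟩
      simp [List.length_eq_zero_iff.1 h]
    calc ∑' ρ : {ρ : List ℕ | (∀ a ∈ ρ, a ∈ D) ∧ ρ.length = 0}, ENNReal.ofReal (strP P ρ)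
        ≤ ∑' ρ : ({[]} : Set (List ℕ)), ENNReal.ofReal (strP P ρ) :=
          ENNReal.tsum_mono_subtype (fun l => ENNReal.ofReal (strP P l)) hsub
      _ = 1 := by
            rw [tsum_singleton ([] : List ℕ) (fun l => ENNReal.ofReal (strP P l))]
            simp [strP_nil]
      _ = _ := by simp
  | succ n ih =>
    set q := ∑' a : D, ENNReal.ofReal (P a) with hq
    -- inject into D × (strings of length n)
    set T : Set (List ℕ) := {ρ : List ℕ | (∀ a ∈ ρ, a ∈ D) ∧ ρ.length = n} with hT
    have key : ∑' ρ : {ρ : List ℕ | (∀ a ∈ ρ, a ∈ D) ∧ ρ.length = n + 1},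
        ENNReal.ofReal (strP P ρ)
        ≤ ∑' x : D × T, ENNReal.ofReal (P (x.1 : ℕ)) * ENNReal.ofReal (strP P (x.2 : List ℕ)) := by
      apply ENNReal.summable.tsum_le_tsum_of_inj
        (fun ρ : {ρ : List ℕ | (∀ a ∈ ρ, a ∈ D) ∧ ρ.length = n + 1} =>
          ((⟨(ρ : List ℕ).head!, by
              obtain ⟨h1, h2⟩ := ρ.2
              apply h1
              apply List.head!_mem_self
              intro hh
              rw [hh] at h2; simp at h2⟩ : D),
           (⟨(ρ : List ℕ).tail, by
              obtain ⟨h1, h2⟩ := ρ.2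
              constructor
              · exact fun a ha => h1 a (List.mem_of_mem_tail ha)
              · simp [h2]⟩ : T)))
      · intro ρ1 ρ2 h
        simp only [Prod.mk.injEq, Subtype.mk.injEq] at h
        apply Subtype.ext
        have e1 : (ρ1 : List ℕ) ≠ [] := by
          intro hh
          have := ρ1.2.2
          rw [hh] at this; simp at this
        have e2 : (ρ2 : List ℕ) ≠ [] := by
          intro hh
          have := ρ2.2.2
          rw [hh] at this; simp at this
        rw [← List.cons_head!_tail e1, ← List.cons_head!_tail e2, h.1, h.2]
      · intro c _; exact zero_le
      · intro ρ
        obtain ⟨h1, h2⟩ := ρ.2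
        have e1 : (ρ : List ℕ) ≠ [] := by
          intro hh; rw [hh] at h2; simp at h2
        have ha : 0 ≤ P (ρ : List ℕ).head! := by
          exact hPD _ (h1 _ (List.head!_mem_self e1))
        refine le_of_eq ?_
        show ENNReal.ofReal (strP P (ρ : List ℕ))
          = ENNReal.ofReal (P (ρ : List ℕ).head!) * ENNReal.ofReal (strP P (ρ : List ℕ).tail)
        calc ENNReal.ofReal (strP P (ρ : List ℕ))
            = ENNReal.ofReal (strP P ((ρ : List ℕ).head! :: (ρ : List ℕ).tail)) := by
              rw [List.cons_head!_tail e1]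
          _ = ENNReal.ofReal (P (ρ : List ℕ).head!)
              * ENNReal.ofReal (strP P (ρ : List ℕ).tail) := ofReal_strP_cons ha _
      · exact ENNReal.summable
    refine key.trans ?_
    have : ∑' x : D × T, ENNReal.ofReal (P (x.1 : ℕ)) * ENNReal.ofReal (strP P (x.2 : List ℕ))
        = q * ∑' ρ : T, ENNReal.ofReal (strP P (ρ : List ℕ)) := by
      rw [ENNReal.tsum_prod']
      calc ∑' (a : D) (ρ : T), ENNReal.ofReal (P (a : ℕ)) * ENNReal.ofReal (strP P (ρ : List ℕ))
          = ∑' a : D, ENNReal.ofReal (P (a : ℕ))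
            * ∑' ρ : T, ENNReal.ofReal (strP P (ρ : List ℕ)) := by
            congr 1; funext a; exact ENNReal.tsum_mul_left
        _ = _ := ENNReal.tsum_mul_right
    rw [this, pow_succ, mul_comm (q ^ n) q]
    exact mul_le_mul' le_rfl ih

/-- Sum of weights over all strings over an alphabet `D`. -/
lemma sum_lists_le (D : Set ℕ) (hPD : ∀ a ∈ D, 0 ≤ P a) :
    ∑' ρ : {ρ : List ℕ | ∀ a ∈ ρ, a ∈ D}, ENNReal.ofReal (strP P ρ)
      ≤ (1 - ∑' a : D, ENNReal.ofReal (P a))⁻¹ := by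
  set q := ∑' a : D, ENNReal.ofReal (P a) with hq
  have hcover : {ρ : List ℕ | ∀ a ∈ ρ, a ∈ D}
      = ⋃ n : ℕ, {ρ : List ℕ | (∀ a ∈ ρ, a ∈ D) ∧ ρ.length = n} := by
    ext ρ; simp
  calc ∑' ρ : {ρ : List ℕ | ∀ a ∈ ρ, a ∈ D}, ENNReal.ofReal (strP P ρ)
      = ∑' ρ : (⋃ n : ℕ, {ρ : List ℕ | (∀ a ∈ ρ, a ∈ D) ∧ ρ.length = n}),
          ENNReal.ofReal (strP P ρ) := by rw [← hcover]
    _ ≤ ∑' n : ℕ, ∑' ρ : {ρ : List ℕ | (∀ a ∈ ρ, a ∈ D) ∧ ρ.length = n},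
          ENNReal.ofReal (strP P ρ) := ENNReal.tsum_iUnion_le_tsum (fun l => ENNReal.ofReal (strP P l)) _
    _ ≤ ∑' n : ℕ, q ^ n := ENNReal.tsum_le_tsum fun n => sum_len_le D hPD n
    _ = (1 - q)⁻¹ := ENNReal.tsum_geometric q

end measureaux

/-- Fiber sum bound: the total weight of strings over `Ω` that filter to `σ`
and end in `B` is at most `strP P σ * S ^ |σ|`. -/
lemma fiber_le {P : ℕ → ℝ} (Ω B : Set ℕ) (hBsub : B ⊆ Ω) (hPΩ : ∀ a ∈ Ω, 0 ≤ P a)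
    (fB : ℕ → Bool) (hfB : ∀ a, a ∈ B ↔ fB a = true)
    (S : ℝ≥0∞)
    (hS : ∑' ρ : {ρ : List ℕ | ∀ a ∈ ρ, a ∈ Ω \ B}, ENNReal.ofReal (strP P ρ) ≤ S)
    (σ : List ℕ) (hσ : ∀ a ∈ σ, a ∈ B) :
    ∑' τ : {τ : List ℕ | (∀ a ∈ τ, a ∈ Ω) ∧ τ.filter fB = σ ∧
        τ.getLast?.elim True (· ∈ B)}, ENNReal.ofReal (strP P τ)
      ≤ ENNReal.ofReal (strP P σ) * S ^ σ.length := by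
  induction σ with
  | nil =>
    have hsub : {τ : List ℕ | (∀ a ∈ τ, a ∈ Ω) ∧ τ.filter fB = [] ∧
        τ.getLast?.elim True (· ∈ B)} ⊆ {([] : List ℕ)} := by
      rintro τ ⟨-, h2, h3⟩
      rcases hx : τ.getLast? with - | b
      · simpa using List.getLast?_eq_none_iff.1 hx
      · rw [hx] at h3
        simp only [Option.elim] at h3
        have hb : b ∈ τ := List.mem_of_getLast? hx
        have : b ∈ τ.filter fB := List.mem_filter.2 ⟨hb, (hfB b).1 h3⟩
        rw [h2] at this
        simp at this
    calc ∑' τ : {τ : List ℕ | (∀ a ∈ τ, a ∈ Ω) ∧ τ.filter fB = [] ∧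
          τ.getLast?.elim True (· ∈ B)}, ENNReal.ofReal (strP P τ)
        ≤ ∑' τ : ({[]} : Set (List ℕ)), ENNReal.ofReal (strP P τ) :=
          ENNReal.tsum_mono_subtype (fun l => ENNReal.ofReal (strP P l)) hsub
      _ = 1 := by
          rw [tsum_singleton ([] : List ℕ) (fun l => ENNReal.ofReal (strP P l))]
          simp [strP_nil]
      _ ≤ _ := by simp [strP_nil]
  | cons a σ' ih =>
    have haB : a ∈ B := hσ a (List.mem_cons_self)
    have haΩ : a ∈ Ω := hBsub haB
    have hσ' : ∀ b ∈ σ', b ∈ B := fun b hb => hσ b (List.mem_cons_of_mem _ hb)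
    set G : Set (List ℕ) := {ρ : List ℕ | ∀ x ∈ ρ, x ∈ Ω \ B} with hG
    set F : Set (List ℕ) := {τ : List ℕ | (∀ x ∈ τ, x ∈ Ω) ∧ τ.filter fB = σ' ∧
        τ.getLast?.elim True (· ∈ B)} with hF
    -- decomposition of an element of the fiber of `a :: σ'`
    have decomp : ∀ τ : List ℕ, (∀ x ∈ τ, x ∈ Ω) → τ.filter fB = a :: σ' →
        τ.getLast?.elim True (· ∈ B) →
        (τ.takeWhile (fun x => !fB x) ∈ G) ∧
        ((τ.dropWhile (fun x => !fB x)).tail ∈ F) ∧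
        τ = τ.takeWhile (fun x => !fB x) ++ a :: (τ.dropWhile (fun x => !fB x)).tail := by
      intro τ h1 h2 h3
      set ρ := τ.takeWhile (fun x => !fB x) with hρ
      set r := τ.dropWhile (fun x => !fB x) with hr
      have hsplit : ρ ++ r = τ := List.takeWhile_append_dropWhile
      have hρG : ρ ∈ G := by
        intro x hx
        have hmem : x ∈ τ := (List.takeWhile_sublist _).mem hx
        have := List.mem_takeWhile_imp hx
        simp only [Bool.not_eq_true'] at this
        refine ⟨h1 x hmem, fun hxB => ?_⟩
        rw [(hfB x).1 hxB] at this
        exact absurd this (by simp)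
      have hρfilt : ρ.filter fB = [] := by
        rw [List.filter_eq_nil_iff]
        intro x hx
        have := List.mem_takeWhile_imp hx
        simp only [Bool.not_eq_true'] at this
        simp [this]
      have hrne : r ≠ [] := by
        intro hh
        rw [← hsplit, hh, List.append_nil, hρfilt] at h2
        simp at h2
      have hrcons : r.head hrne :: r.tail = r := List.cons_head_tail hrne
      have hrhead : fB (r.head hrne) = true := by
        have := List.head_dropWhile_not (fun x => !fB x) hrne
        simpa using this
      have hfiltr : List.filter fB τ = r.head hrne :: List.filter fB r.tail := by
        conv_lhs => rw [← hsplit, List.filter_append, hρfilt, List.nil_append, ← hrcons]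
        rw [List.filter_cons, if_pos hrhead]
      rw [h2] at hfiltr
      have hhead : r.head hrne = a := by
        injection hfiltr.symm with h _
      have htails : List.filter fB r.tail = σ' := by
        injection hfiltr.symm with _ h
      have heq : τ = ρ ++ a :: r.tail := by
        conv_lhs => rw [← hsplit, ← hrcons]
        rw [hhead]
      have htailΩ : ∀ x ∈ r.tail, x ∈ Ω := fun x hx =>
        h1 x ((List.dropWhile_sublist _).mem (List.mem_of_mem_tail hx))
      have hlastF : (r.tail).getLast?.elim True (· ∈ B) := by
        rcases hx : r.tail.getLast? with - | b
        · simp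
        · have hτl : τ.getLast? = some b := by
            rw [heq, List.append_cons, List.getLast?_append, hx]
            rfl
          rw [hτl] at h3
          exact h3
      exact ⟨hρG, ⟨htailΩ, htails, hlastF⟩, heq⟩
    -- the injection into `G × F`
    have key : ∑' τ : {τ : List ℕ | (∀ x ∈ τ, x ∈ Ω) ∧ τ.filter fB = a :: σ' ∧
          τ.getLast?.elim True (· ∈ B)}, ENNReal.ofReal (strP P τ)
        ≤ ∑' x : ↥G × ↥F, ENNReal.ofReal (strP P (x.1 : List ℕ))
            * (ENNReal.ofReal (P a) * ENNReal.ofReal (strP P (x.2 : List ℕ))) := by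
      apply ENNReal.summable.tsum_le_tsum_of_inj
        (fun τ : {τ : List ℕ | (∀ x ∈ τ, x ∈ Ω) ∧ τ.filter fB = a :: σ' ∧
            τ.getLast?.elim True (· ∈ B)} =>
          ((⟨(τ : List ℕ).takeWhile (fun x => !fB x),
              (decomp τ τ.2.1 τ.2.2.1 τ.2.2.2).1⟩ : ↥G),
           (⟨((τ : List ℕ).dropWhile (fun x => !fB x)).tail,
              (decomp τ τ.2.1 τ.2.2.1 τ.2.2.2).2.1⟩ : ↥F)))
      · intro τ1 τ2 h
        simp only [Prod.mk.injEq, Subtype.mk.injEq] at h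
        apply Subtype.ext
        rw [(decomp τ1 τ1.2.1 τ1.2.2.1 τ1.2.2.2).2.2, (decomp τ2 τ2.2.1 τ2.2.2.1 τ2.2.2.2).2.2,
          h.1, h.2]
      · intro c _; exact zero_le
      · intro τ
        obtain ⟨hg, hf, heq⟩ := decomp τ τ.2.1 τ.2.2.1 τ.2.2.2
        refine le_of_eq ?_
        show ENNReal.ofReal (strP P (τ : List ℕ))
          = ENNReal.ofReal (strP P ((τ : List ℕ).takeWhile (fun x => !fB x)))
            * (ENNReal.ofReal (P a)
              * ENNReal.ofReal (strP P (((τ : List ℕ).dropWhile (fun x => !fB x)).tail)))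
        have hρnn : 0 ≤ strP P ((τ : List ℕ).takeWhile (fun x => !fB x)) :=
          strP_nonneg hPΩ (fun x hx => (hg x hx).1)
        conv_lhs => rw [heq]
        rw [ofReal_strP_append hρnn, ofReal_strP_cons (hPΩ a haΩ)]
      · exact ENNReal.summable
    refine key.trans ?_
    have hprod : ∑' x : ↥G × ↥F, ENNReal.ofReal (strP P (x.1 : List ℕ))
        * (ENNReal.ofReal (P a) * ENNReal.ofReal (strP P (x.2 : List ℕ)))
        = (∑' ρ : ↥G, ENNReal.ofReal (strP P (ρ : List ℕ)))
          * (ENNReal.ofReal (P a) * ∑' τ : ↥F, ENNReal.ofReal (strP P (τ : List ℕ))) := by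
      rw [ENNReal.tsum_prod']
      calc ∑' (ρ : ↥G) (τ : ↥F), ENNReal.ofReal (strP P (ρ : List ℕ))
            * (ENNReal.ofReal (P a) * ENNReal.ofReal (strP P (τ : List ℕ)))
          = ∑' ρ : ↥G, ENNReal.ofReal (strP P (ρ : List ℕ))
            * (ENNReal.ofReal (P a) * ∑' τ : ↥F, ENNReal.ofReal (strP P (τ : List ℕ))) := by
            congr 1; funext ρ
            rw [ENNReal.tsum_mul_left, ENNReal.tsum_mul_left]
        _ = _ := ENNReal.tsum_mul_right
    rw [hprod]
    calc (∑' ρ : ↥G, ENNReal.ofReal (strP P (ρ : List ℕ)))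
          * (ENNReal.ofReal (P a) * ∑' τ : ↥F, ENNReal.ofReal (strP P (τ : List ℕ)))
        ≤ S * (ENNReal.ofReal (P a) * (ENNReal.ofReal (strP P σ') * S ^ σ'.length)) :=
          mul_le_mul' hS (mul_le_mul' le_rfl (ih hσ'))
      _ = ENNReal.ofReal (strP P (a :: σ')) * S ^ (a :: σ').length := by
          rw [ofReal_strP_cons (hPΩ a haΩ), List.length_cons, pow_succ]
          ring


lemma pre_zero {Γ : Type*} (α : ℕ → Γ) : pre α 0 = [] := by simp [pre]

lemma pre_succ {Γ : Type*} (α : ℕ → Γ) (N : ℕ) : pre α (N + 1) = pre α N ++ [α N] := by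
  rw [pre, List.ofFn_succ']
  simp [pre, List.concat_eq_append]

lemma filt_pre (B : Set ℕ) (fB : ℕ → Bool) (hfB : ∀ a, a ∈ B ↔ fB a = true)
    (α : ℕ → ℕ) (s : ℕ → ℕ) (hs : StrictMono s) (hsB : ∀ k, α (s k) ∈ B)
    (hall : ∀ m, α m ∈ B → ∃ k, s k = m) :
    ∀ N m, (∀ k, s k < N ↔ k < m) →
      List.filter fB (pre α N) = pre (fun k => α (s k)) m := by
  intro N
  induction N with
  | zero =>
    intro m h
    have h0 := h 0
    have hm : m = 0 := by omega
    simp [hm, pre_zero]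
  | succ N IH =>
    intro m h
    rw [pre_succ, List.filter_append]
    by_cases hB : α N ∈ B
    · obtain ⟨k0, hk0⟩ := hall N hB
      have h1 := h k0
      have h2 := h (k0 + 1)
      have hlt : s k0 < s (k0 + 1) := hs (Nat.lt_succ_self k0)
      have hm : m = k0 + 1 := by omega
      have hIH : List.filter fB (pre α N) = pre (fun k => α (s k)) k0 := by
        apply IH
        intro k
        rw [← hk0, hs.lt_iff_lt]
      have hfa : fB (α N) = true := (hfB _).1 hB
      rw [hIH, hm, pre_succ]
      simp [hfa, hk0]
    · have hne : ∀ k, s k ≠ N := fun k hk => hB (hk ▸ hsB k)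
      have hIH : List.filter fB (pre α N) = pre (fun k => α (s k)) m := by
        apply IH
        intro k
        have hk := h k
        have := hne k
        omega
      have hfa : fB (α N) = false := by
        rcases hfa : fB (α N) with - | -
        · rfl
        · exact absurd ((hfB _).2 hfa) hB
      rw [hIH]
      simp [hfa]

/-- Closure of ensembles under conditioning: for a recursive event
`B ⊆ Ω` with `P(B) > 0`, the sequence obtained from a Martin-Löf `P`-random `α` by
deleting all elements not in `B` (here `s` enumerates `{n | α n ∈ B}` in increasing
order) is Martin-Löf `P_B`-random, where `P_B a = P a / P(B)`. -/
theorem stmt16 (Ω : Set ℕ) (hre : REPred (· ∈ Ω)) (hinf : Ω.Infinite)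
    (P : ℕ → ℝ) (hP : isProb Ω P)
    (B : Set ℕ) (hBsub : B ⊆ Ω) (hBrec : ComputablePred (· ∈ B))
    (pB : ℝ) (hpB : HasSum (fun b : B => P (b : ℕ)) pB) (hpBpos : 0 < pB)
    (α : ℕ → ℕ) (hα : seqIn Ω α) (hrand : MLRandom Ω P α)
    (s : ℕ → ℕ) (hs : StrictMono s)
    (hsB : ∀ k, α (s k) ∈ B)
    (hall : ∀ m, α m ∈ B → ∃ k, s k = m) :
    MLRandom B (fun a => P a / pB) (fun k => α (s k)) := by
  obtain ⟨fB, hfBc, hfBe⟩ := ComputablePred.computable_iff.1 hBrec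
  have hfB : ∀ a, a ∈ B ↔ fB a = true := fun a => iff_of_eq (congrFun hfBe a)
  have hPpos : ∀ a ∈ Ω, 0 ≤ P a := hP.1
  intro C hC
  obtain ⟨hCre, hCalpha, hCcond⟩ := hC
  set C' : Set (ℕ × List ℕ) := {x | (∀ a ∈ x.2, a ∈ Ω) ∧ (x.1, x.2.filter fB) ∈ C ∧
    x.2.getLast?.elim True (· ∈ B)} with hC'def
  -- basic sums
  set p := ENNReal.ofReal pB with hpdef
  have hppos : 0 < p := ENNReal.ofReal_pos.2 hpBpos
  have hBsum : ∑' b : ↥B, ENNReal.ofReal (P (b : ℕ)) = p := by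
    rw [hpdef, ← hpB.tsum_eq,
      ENNReal.ofReal_tsum_of_nonneg (fun b => hPpos _ (hBsub b.2)) hpB.summable]
  have hΩsum : ∑' a : ↥Ω, ENNReal.ofReal (P (a : ℕ)) = 1 := by
    rw [← ENNReal.ofReal_one, ← hP.2.tsum_eq,
      ENNReal.ofReal_tsum_of_nonneg (fun a => hPpos _ a.2) hP.2.summable]
  set q := ∑' a : ↥(Ω \ B), ENNReal.ofReal (P (a : ℕ)) with hqdef
  have hpq : p + q ≤ 1 := by
    have hdisj : Disjoint B (Ω \ B) := Set.disjoint_sdiff_right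
    calc p + q = ∑' a : ↥(B ∪ (Ω \ B)), ENNReal.ofReal (P (a : ℕ)) := by
          rw [ENNReal.summable.tsum_union_disjoint (f := fun a => ENNReal.ofReal (P a)) hdisj
            ENNReal.summable, hBsum]
      _ ≤ ∑' a : ↥Ω, ENNReal.ofReal (P (a : ℕ)) :=
          ENNReal.tsum_mono_subtype (fun a => ENNReal.ofReal (P a))
            (Set.union_subset hBsub Set.diff_subset)
      _ = 1 := hΩsum
  have hq1 : q ≠ ∞ := by
    intro hq
    rw [hq] at hpq
    simp at hpq
  have hS : ∑' ρ : {ρ : List ℕ | ∀ a ∈ ρ, a ∈ Ω \ B}, ENNReal.ofReal (strP P ρ)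
      ≤ (1 - q)⁻¹ := sum_lists_le (Ω \ B) (fun a ha => hPpos a ha.1)
  have hSp : (1 - q)⁻¹ ≤ p⁻¹ :=
    ENNReal.inv_le_inv' (ENNReal.le_sub_of_add_le_right hq1 hpq)
  -- measure bound
  have hmeas : ∀ n, 1 ≤ n → mOpen P {σ | (n, σ) ∈ C'}
      ≤ mOpen (fun a => P a / pB) {σ | (n, σ) ∈ C} := by
    intro n hn
    have hsub : {σ | (n, σ) ∈ C'} ⊆
        ⋃ (σ0 : {σ | (n, σ) ∈ C}), {τ : List ℕ | (∀ x ∈ τ, x ∈ Ω) ∧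
          τ.filter fB = (σ0 : List ℕ) ∧ τ.getLast?.elim True (· ∈ B)} := by
      intro τ hτ
      exact Set.mem_iUnion.2 ⟨⟨τ.filter fB, hτ.2.1⟩, hτ.1, rfl, hτ.2.2⟩
    calc mOpen P {σ | (n, σ) ∈ C'}
        ≤ ∑' τ : ↥(⋃ (σ0 : {σ | (n, σ) ∈ C}), {τ : List ℕ | (∀ x ∈ τ, x ∈ Ω) ∧
            τ.filter fB = (σ0 : List ℕ) ∧ τ.getLast?.elim True (· ∈ B)}),
            ENNReal.ofReal (strP P (τ : List ℕ)) :=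
          ENNReal.tsum_mono_subtype (fun l => ENNReal.ofReal (strP P l)) hsub
      _ ≤ ∑' σ0 : {σ | (n, σ) ∈ C}, ∑' τ : {τ : List ℕ | (∀ x ∈ τ, x ∈ Ω) ∧
            τ.filter fB = (σ0 : List ℕ) ∧ τ.getLast?.elim True (· ∈ B)},
            ENNReal.ofReal (strP P (τ : List ℕ)) :=
          ENNReal.tsum_iUnion_le_tsum (fun l => ENNReal.ofReal (strP P l)) _
      _ ≤ ∑' σ0 : {σ | (n, σ) ∈ C},
            ENNReal.ofReal (strP P (σ0 : List ℕ)) * ((1 - q)⁻¹) ^ (σ0 : List ℕ).length :=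
          ENNReal.tsum_le_tsum fun σ0 =>
            fiber_le Ω B hBsub hPpos fB hfB _ hS _ (hCalpha (n, (σ0 : List ℕ)) σ0.2)
      _ ≤ ∑' σ0 : {σ | (n, σ) ∈ C},
            ENNReal.ofReal (strP P (σ0 : List ℕ)) * (p⁻¹) ^ (σ0 : List ℕ).length :=
          ENNReal.tsum_le_tsum fun σ0 => mul_le_mul' le_rfl (pow_le_pow_left' hSp _)
      _ = mOpen (fun a => P a / pB) {σ | (n, σ) ∈ C} := by
          refine tsum_congr fun σ0 => ?_
          exact (ofReal_strP_div hpBpos hPpos _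
            (fun a ha => hBsub (hCalpha (n, (σ0 : List ℕ)) σ0.2 a ha))).symm
  -- C' is a Martin-Löf P-test over Ω
  have htest : MLTest Ω P C' := by
    refine ⟨main_re Ω B C hre hBrec hCre fB hfB, fun x hx => hx.1, fun n hn =>
      ⟨?_, lt_of_le_of_lt (hmeas n hn) (hCcond n hn).2⟩⟩
    intro σ hσ τ hτ hpre
    have h1 := (hCcond n hn).1 _ hσ.2.1 _ hτ.2.1 (hpre.filter fB)
    obtain ⟨ext, rfl⟩ := hpre
    rw [List.filter_append] at h1
    have hext : List.filter fB ext = [] := by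
      have h2 : List.filter fB σ ++ [] = List.filter fB σ ++ List.filter fB ext := by
        rw [List.append_nil]; exact h1
      exact (List.append_cancel_left h2).symm
    by_cases hne : ext = []
    · rw [hne, List.append_nil]
    · exfalso
      obtain ⟨b, hgl⟩ : ∃ b, ext.getLast? = some b := by
        rcases hgl : ext.getLast? with - | b
        · exact absurd (List.getLast?_eq_none_iff.1 hgl) hne
        · exact ⟨b, rfl⟩
      have hτl : (σ ++ ext).getLast? = some b := by
        rw [List.getLast?_append, hgl]; rfl
      have hbB : b ∈ B := by
        have h3 := hτ.2.2
        rw [hτl] at h3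
        exact h3
      have := List.filter_eq_nil_iff.1 hext b (List.mem_of_getLast? hgl)
      exact this ((hfB b).1 hbB)
  -- apply randomness of α
  obtain ⟨n, hn1, hncyl⟩ := hrand C' htest
  refine ⟨n, hn1, fun hβ => hncyl ?_⟩
  obtain ⟨m, hm⟩ := hβ
  rcases m with - | k
  · refine ⟨0, ?_⟩
    show (n, pre α 0) ∈ C'
    rw [pre_zero] at hm ⊢
    exact ⟨by simp, by simpa using hm, by simp⟩
  · refine ⟨s k + 1, ?_⟩
    show (n, pre α (s k + 1)) ∈ C'
    have hfilt : List.filter fB (pre α (s k + 1)) = pre (fun j => α (s j)) (k + 1) := by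
      apply filt_pre B fB hfB α s hs hsB hall
      intro j
      have := hs.le_iff_le (a := j) (b := k)
      constructor
      · intro hj
        by_contra hjk
        have : s k < s j := hs (by omega)
        omega
      · intro hj
        have : s j ≤ s k := hs.le_iff_le.2 (by omega)
        omega
    refine ⟨?_, ?_, ?_⟩
    · intro a ha
      obtain ⟨i, rfl⟩ := Set.mem_range.1 ((List.mem_ofFn' _ _).1
        (show a ∈ List.ofFn (fun i : Fin (s k + 1) => α i) from ha))
      exact hα _
    · rw [hfilt]; exact hm
    · rw [pre_succ, List.getLast?_concat]
      exact hsB k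
end

section
/- Let Ω and Ω' be r.e. infinite sets, P a discrete probability space on Ω, and X : Ω → Ω' a random variable which is a partial recursive function with domain exactly Ω. If α is Martin-Löf P-random, then X(α) (the pointwise image sequence, X(α)(k) := X(α(k))) is Martin-Löf X(P)-random, where X(P)(x) := P(X⁻¹({x})). -/
open scoped ENNReal

section Stmt17Aux

open Nat.Partrec (Code)
open Nat.Partrec.Code
set_option maxHeartbeats 1000000

/-- Map `evaln s c` over a list, in the `Option` monad. -/
def stmt17_omapE (c : Code) (s : ℕ) : List ℕ → Option (List ℕ)
  | [] => some []
  | a :: l => (evaln s c a).bind fun y => (stmt17_omapE c s l).map (y :: ·)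

lemma stmt17_omapE_eq_some (c : Code) (s : ℕ) :
    ∀ (τ σ : List ℕ), stmt17_omapE c s τ = some σ ↔
      List.Forall₂ (fun a y => evaln s c a = some y) τ σ := by
  intro τ
  induction τ with
  | nil =>
      intro σ
      constructor
      · intro h; cases h; exact List.Forall₂.nil
      · intro h; rw [List.forall₂_nil_left_iff.1 h]; rfl
  | cons a l ih =>
      intro σ
      simp only [stmt17_omapE, Option.bind_eq_some_iff, Option.map_eq_some_iff,
        List.forall₂_cons_left_iff]
      constructor
      · rintro ⟨y, hy, l', hl', rfl⟩
        exact ⟨y, l', hy, (ih l').1 hl', rfl⟩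
      · rintro ⟨y, l', hy, hl', rfl⟩
        exact ⟨y, hy, l', (ih l').2 hl', rfl⟩

lemma stmt17_omapE_primrec (c : Code) :
    Primrec₂ (fun s τ => stmt17_omapE c s τ) := by
  have heval : Primrec₂ (fun (s : ℕ) (a : ℕ) => evaln s c a) :=
    (primrec_evaln.comp
      (Primrec.pair (Primrec.pair Primrec.fst (Primrec.const c)) Primrec.snd)).to₂
  have h2 : Primrec₂ (fun (p : ℕ × List ℕ) (q : ℕ × Option (List ℕ)) =>
      (evaln p.1 c q.1).bind fun y => q.2.map (y :: ·)) := by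
    have hmap : Primrec₂ (fun (x : (ℕ × List ℕ) × (ℕ × Option (List ℕ))) (y : ℕ) =>
        x.2.2.map (y :: ·)) :=
      (Primrec.option_map ((Primrec.snd.comp Primrec.snd).comp Primrec.fst)
        (Primrec.list_cons.comp (Primrec.snd.comp Primrec.fst) Primrec.snd).to₂).to₂
    exact (Primrec.option_bind
      (heval.comp (Primrec.fst.comp Primrec.fst) (Primrec.fst.comp Primrec.snd)) hmap).to₂
  have h3 := Primrec.list_foldr (α := ℕ × List ℕ) (β := ℕ) (σ := Option (List ℕ))
    (f := fun p => p.2) (g := fun _ => some [])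
    (h := fun p q => (evaln p.1 c q.1).bind fun y => q.2.map (y :: ·))
    Primrec.snd (Primrec.const _) h2
  refine Primrec₂.of_eq h3.to₂ ?_
  intro s τ
  simp only []
  induction τ with
  | nil => rfl
  | cons a l ih => simp [stmt17_omapE, ih]

lemma stmt17_re (C : Set (ℕ × List ℕ)) (hC : REPred (· ∈ C))
    (X : ℕ →. ℕ) (hX : Partrec X) :
    REPred (fun p : ℕ × List ℕ =>
      ∃ σ, (p.1, σ) ∈ C ∧ List.Forall₂ (fun a x => x ∈ X a) p.2 σ) := by
  obtain ⟨cX, hcX⟩ := exists_code.1 (Partrec.nat_iff.1 hX)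
  obtain ⟨cC, hcC⟩ := exists_code.1 hC
  set B : ℕ × List ℕ → ℕ → Bool := fun p s =>
    ((stmt17_omapE cX s p.2).map fun σ =>
      (evaln s cC (Encodable.encode (p.1, σ))).isSome).getD false with hB
  have hCc : ∀ p : ℕ × List ℕ, p ∈ C ↔ ∃ s x, evaln s cC (Encodable.encode p) = some x := by
    intro p
    have hd : p ∈ C ↔ (eval cC (Encodable.encode p)).Dom := by
      rw [hcC]
      show p ∈ C ↔ (Part.bind _ _).Dom
      rw [Encodable.encodek]
      simp [Part.assert]
    rw [hd, Part.dom_iff_mem]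
    constructor
    · rintro ⟨x, hx⟩; obtain ⟨s, hs⟩ := evaln_complete.1 hx; exact ⟨s, x, hs⟩
    · rintro ⟨s, x, hs⟩; exact ⟨x, evaln_sound hs⟩
  have hXc : ∀ a x : ℕ, x ∈ X a ↔ ∃ s, evaln s cX a = some x := by
    intro a x; rw [← hcX]; exact evaln_complete
  have hmono : ∀ {s s' : ℕ} {τ σ : List ℕ}, s ≤ s' → stmt17_omapE cX s τ = some σ →
      stmt17_omapE cX s' τ = some σ := by
    intro s s' τ σ hs h
    rw [stmt17_omapE_eq_some] at h ⊢
    exact h.imp fun a b h' => evaln_mono hs h'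
  have hexists : ∀ {τ σ : List ℕ}, List.Forall₂ (fun a x => x ∈ X a) τ σ →
      ∃ s, stmt17_omapE cX s τ = some σ := by
    intro τ σ h
    induction h with
    | nil => exact ⟨0, rfl⟩
    | cons hxy _ ih =>
        obtain ⟨s₁, h1⟩ := (hXc _ _).1 hxy
        obtain ⟨s₂, h2⟩ := ih
        refine ⟨max s₁ s₂, ?_⟩
        rw [stmt17_omapE_eq_some]
        exact List.Forall₂.cons (evaln_mono (le_max_left _ _) h1)
          ((stmt17_omapE_eq_some _ _ _ _).1 (hmono (le_max_right _ _) h2))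
  have key : ∀ p : ℕ × List ℕ,
      (∃ σ, (p.1, σ) ∈ C ∧ List.Forall₂ (fun a x => x ∈ X a) p.2 σ) ↔
        ∃ s, B p s = true := by
    intro p
    constructor
    · rintro ⟨σ, hcm, hfor⟩
      obtain ⟨s₀, x, hx⟩ := (hCc _).1 hcm
      obtain ⟨s₁, h1⟩ := hexists hfor
      refine ⟨max s₀ s₁, ?_⟩
      rw [hB]
      simp only [hmono (le_max_right s₀ s₁) h1, Option.map_some, Option.getD_some]
      exact Option.isSome_iff_exists.2 ⟨x, evaln_mono (le_max_left _ _) hx⟩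
    · rintro ⟨s, hs⟩
      rw [hB] at hs
      simp only [] at hs
      cases h : stmt17_omapE cX s p.2 with
      | none => rw [h] at hs; simp at hs
      | some σ =>
          rw [h] at hs
          simp only [Option.map_some, Option.getD_some] at hs
          obtain ⟨x, hx⟩ := Option.isSome_iff_exists.1 hs
          refine ⟨σ, (hCc _).2 ⟨s, x, hx⟩, ?_⟩
          exact ((stmt17_omapE_eq_some _ _ _ _).1 h).imp fun a b h' =>
            (hXc a b).2 ⟨s, h'⟩
  have hBcomp : Computable₂ B := by
    have hevalC : Primrec₂ (fun (s : ℕ) (n : ℕ) => evaln s cC n) :=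
      (primrec_evaln.comp
        (Primrec.pair (Primrec.pair Primrec.fst (Primrec.const cC)) Primrec.snd)).to₂
    have hg : Primrec₂ (fun (x : (ℕ × List ℕ) × ℕ) (σ : List ℕ) =>
        (evaln x.2 cC (Encodable.encode (x.1.1, σ))).isSome) :=
      (Primrec.option_isSome.comp
        (hevalC.comp (Primrec.snd.comp Primrec.fst)
          (Primrec.encode.comp
            (Primrec.pair ((Primrec.fst.comp Primrec.fst).comp Primrec.fst)
              Primrec.snd)))).to₂
    have hm : Primrec (fun x : (ℕ × List ℕ) × ℕ =>
        ((stmt17_omapE cX x.2 x.1.2).map fun σ =>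
          (evaln x.2 cC (Encodable.encode (x.1.1, σ))).isSome)) :=
      Primrec.option_map
        ((stmt17_omapE_primrec cX).comp Primrec.snd (Primrec.snd.comp Primrec.fst)) hg
    exact (Primrec.option_getD.comp hm (Primrec.const false)).to_comp.to₂
  have hrf : Partrec fun p : ℕ × List ℕ => Nat.rfind fun s => Part.some (B p s) :=
    Partrec.rfind hBcomp.partrec₂
  refine hrf.dom_re.of_eq fun p => ?_
  refine (Nat.rfind_dom (p := fun s => Part.some (B p s))).trans ?_
  constructor
  · rintro ⟨n, hn, -⟩
    exact (key p).2 ⟨n, by simpa using hn⟩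
  · rintro h
    obtain ⟨s, hs⟩ := (key p).1 h
    exact ⟨s, by simpa using hs, fun _ => trivial⟩


lemma stmt17_forall2_unique (X : ℕ →. ℕ) :
    ∀ {τ σ σ' : List ℕ}, List.Forall₂ (fun a x => x ∈ X a) τ σ →
      List.Forall₂ (fun a x => x ∈ X a) τ σ' → σ = σ' := by
  intro τ
  induction τ with
  | nil => intro σ σ' h h'
           rw [List.forall₂_nil_left_iff.1 h, List.forall₂_nil_left_iff.1 h']
  | cons a l ih =>
      intro σ σ' h h'
      rcases List.forall₂_cons_left_iff.1 h with ⟨b, u, hb, hu, rfl⟩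
      rcases List.forall₂_cons_left_iff.1 h' with ⟨b', u', hb', hu', rfl⟩
      rw [Part.mem_unique hb hb', ih hu hu']

lemma stmt17_forall2_prefix (X : ℕ →. ℕ) :
    ∀ {τ σ τ' σ' : List ℕ}, List.Forall₂ (fun a x => x ∈ X a) τ σ →
      List.Forall₂ (fun a x => x ∈ X a) τ' σ' → τ <+: τ' → σ <+: σ' := by
  intro τ
  induction τ with
  | nil => intro σ σ' τ' h _ _
           rw [List.forall₂_nil_left_iff.1 h]; exact List.nil_prefix
  | cons a l ih =>
      intro σ τ' σ' h h' hp
      rcases List.forall₂_cons_left_iff.1 h with ⟨b, u, hb, hu, rfl⟩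
      rcases hp with ⟨r, hr⟩
      subst hr
      rcases List.forall₂_cons_left_iff.1 h' with ⟨b', u', hb', hu', rfl⟩
      rw [Part.mem_unique hb hb']
      rcases ih hu hu' ⟨r, rfl⟩ with ⟨r', hr'⟩
      exact ⟨r', by rw [List.cons_append, hr']⟩

lemma stmt17_mem_omega (Ω : Set ℕ) (X : ℕ →. ℕ) (hXdom : ∀ a, (X a).Dom ↔ a ∈ Ω) :
    ∀ {τ σ : List ℕ}, List.Forall₂ (fun a x => x ∈ X a) τ σ → ∀ a ∈ τ, a ∈ Ω := by
  intro τ σ h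
  induction h with
  | nil => intro a ha; simp at ha
  | cons hb _ ih =>
      intro a ha
      rcases List.mem_cons.1 ha with rfl | ha
      · exact (hXdom a).1 (Part.dom_iff_mem.2 ⟨_, hb⟩)
      · exact ih a ha

/-- fiber sum lemma -/
lemma stmt17_fiber_sum (Ω Ω' : Set ℕ) (P : ℕ → ℝ) (hP : isProb Ω P)
    (X : ℕ →. ℕ) (hXdom : ∀ a, (X a).Dom ↔ a ∈ Ω)
    (Q : ℕ → ℝ)
    (hQ : ∀ x ∈ Ω', HasSum (fun a : {a | a ∈ Ω ∧ x ∈ X a} => P (a : ℕ)) (Q x)) :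
    ∀ σ : List ℕ, strIn Ω' σ →
      ∑' τ : {τ : List ℕ | List.Forall₂ (fun a x => x ∈ X a) τ σ},
        ENNReal.ofReal (strP P (τ : List ℕ)) = ENNReal.ofReal (strP Q σ) := by
  intro σ
  induction σ with
  | nil =>
      intro _
      have huniq : ∀ b : {τ : List ℕ | List.Forall₂ (fun a x => x ∈ X a) τ ([] : List ℕ)},
          b = ⟨[], List.Forall₂.nil⟩ := by
        rintro ⟨τ, hτ⟩
        exact Subtype.ext (List.forall₂_nil_right_iff.1 hτ)
      rw [tsum_eq_single (⟨[], List.Forall₂.nil⟩ :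
            {τ : List ℕ | List.Forall₂ (fun a x => x ∈ X a) τ ([] : List ℕ)})
          (fun b hb => absurd (huniq b) hb)]
      simp [strP]
  | cons x σ ih =>
      intro hin
      have hx : x ∈ Ω' := hin x (List.mem_cons_self)
      have hσ : strIn Ω' σ := fun a ha => hin a (List.mem_cons_of_mem _ ha)
      -- the equivalence
      let F : Set ℕ := {a | a ∈ Ω ∧ x ∈ X a}
      let T : List ℕ → Set (List ℕ) := fun s => {τ | List.Forall₂ (fun a y => y ∈ X a) τ s}
      have hbij : Function.Bijective
          (fun p : F × T σ =>
            (⟨p.1.1 :: p.2.1, List.Forall₂.cons p.1.2.2 p.2.2⟩ : T (x :: σ))) := by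
        constructor
        · rintro ⟨⟨a, ha⟩, ⟨t, ht⟩⟩ ⟨⟨a', ha'⟩, ⟨t', ht'⟩⟩ h
          simp only [Subtype.mk.injEq, List.cons.injEq] at h
          simp [Prod.ext_iff, Subtype.ext_iff, h.1, h.2]
        · rintro ⟨τ, hτ⟩
          cases hτ with
          | cons hb ht =>
            exact ⟨⟨⟨_, ⟨(hXdom _).1 (Part.dom_iff_mem.2 ⟨_, hb⟩), hb⟩⟩, ⟨_, ht⟩⟩, rfl⟩
      let e : (F × T σ) ≃ T (x :: σ) := Equiv.ofBijective _ hbij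
      rw [← e.tsum_eq]
      have hQnonneg : 0 ≤ Q x := by
        have := (hQ x hx)
        rw [← this.tsum_eq]
        exact tsum_nonneg fun a => hP.1 _ a.2.1
      have hsum : ∑' a : F, ENNReal.ofReal (P (a : ℕ)) = ENNReal.ofReal (Q x) := by
        rw [← (hQ x hx).tsum_eq,
          ENNReal.ofReal_tsum_of_nonneg (fun a => hP.1 _ a.2.1) (hQ x hx).summable]
      calc ∑' p : F × T σ, ENNReal.ofReal (strP P ((e p : List ℕ)))
          = ∑' p : F × T σ,
              ENNReal.ofReal (P (p.1 : ℕ)) * ENNReal.ofReal (strP P (p.2 : List ℕ)) := by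
            apply tsum_congr
            rintro ⟨⟨a, ha⟩, ⟨t, ht⟩⟩
            show ENNReal.ofReal (strP P (a :: t)) =
              ENNReal.ofReal (P a) * ENNReal.ofReal (strP P t)
            rw [show strP P (a :: t) = P a * strP P t by simp [strP]]
            exact ENNReal.ofReal_mul (hP.1 _ ha.1)
        _ = ∑' (a : F), ∑' (t : T σ),
              ENNReal.ofReal (P (a : ℕ)) * ENNReal.ofReal (strP P (t : List ℕ)) :=
            ENNReal.tsum_prod'
        _ = (∑' a : F, ENNReal.ofReal (P (a : ℕ))) *
              ∑' t : T σ, ENNReal.ofReal (strP P (t : List ℕ)) := by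
            simp_rw [ENNReal.tsum_mul_left]
            rw [ENNReal.tsum_mul_right]
        _ = ENNReal.ofReal (Q x) * ENNReal.ofReal (strP Q σ) := by rw [hsum, ih hσ]
        _ = ENNReal.ofReal (strP Q (x :: σ)) := by
            rw [← ENNReal.ofReal_mul hQnonneg]; simp [strP]

end Stmt17Aux

/-- Closure of ensembles under the mapping by a random variable:
if `X : Ω → Ω'` is a partial recursive function with domain exactly `Ω` and `α` is
Martin-Löf `P`-random, then the pointwise image sequence `β` (with `β k` the value
of `X` at `α k`) is Martin-Löf `X(P)`-random, where `X(P)(x) = P(X⁻¹({x}))`. -/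
theorem stmt17 (Ω Ω' : Set ℕ) (hre : REPred (· ∈ Ω)) (hinf : Ω.Infinite)
    (hre' : REPred (· ∈ Ω')) (hinf' : Ω'.Infinite)
    (P : ℕ → ℝ) (hP : isProb Ω P)
    (X : ℕ →. ℕ) (hXcomp : Partrec X) (hXdom : ∀ a, (X a).Dom ↔ a ∈ Ω)
    (hXrange : ∀ a ∈ Ω, ∀ y ∈ X a, y ∈ Ω')
    (Q : ℕ → ℝ) (hQ : ∀ x ∈ Ω', HasSum (fun a : {a | a ∈ Ω ∧ x ∈ X a} => P (a : ℕ)) (Q x))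
    (α : ℕ → ℕ) (hα : seqIn Ω α) (hrand : MLRandom Ω P α)
    (β : ℕ → ℕ) (hβ : ∀ k, β k ∈ X (α k)) :
    MLRandom Ω' Q β := by
  intro C hC
  have hCre := hC.1
  have hCin := hC.2.1
  have hCtest := hC.2.2
  -- the pulled-back test
  set D : Set (ℕ × List ℕ) :=
    {p | ∃ σ, (p.1, σ) ∈ C ∧ List.Forall₂ (fun a x => x ∈ X a) p.2 σ} with hDdef
  have hDre : REPred (· ∈ D) := stmt17_re C hCre X hXcomp
  have hDin : ∀ p ∈ D, strIn Ω p.2 := by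
    rintro ⟨n, τ⟩ ⟨σ, -, hfor⟩
    exact stmt17_mem_omega Ω X hXdom hfor
  have hDtest : MLTest Ω P D := by
    refine ⟨hDre, hDin, fun n hn => ⟨?_, ?_⟩⟩
    · -- prefix-free
      rintro τ ⟨σ, hσC, hσF⟩ τ' ⟨σ', hσ'C, hσ'F⟩ hp
      have hpre : σ <+: σ' := stmt17_forall2_prefix X hσF hσ'F hp
      have hσeq : σ = σ' := (hCtest n hn).1 σ hσC σ' hσ'C hpre
      have hlen : τ.length = τ'.length := by
        rw [hσF.length_eq, hσ'F.length_eq, hσeq]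
      exact List.IsPrefix.eq_of_length hp hlen
    · -- measure bound
      have hmeas : mOpen P {τ | (n, τ) ∈ D} ≤ mOpen Q {σ | (n, σ) ∈ C} := by
        classical
        set Dn : Set (List ℕ) := {τ | (n, τ) ∈ D} with hDn
        set Cn : Set (List ℕ) := {σ | (n, σ) ∈ C} with hCn
        have hmem : ∀ t : Dn, ∃ σ, (n, σ) ∈ C ∧
            List.Forall₂ (fun a x => x ∈ X a) (t : List ℕ) σ := fun t => t.2
        set φ : Dn → Cn := fun t => ⟨Classical.choose (hmem t),
          (Classical.choose_spec (hmem t)).1⟩ with hφ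
        have hφs : ∀ t : Dn,
            List.Forall₂ (fun a x => x ∈ X a) (t : List ℕ) ((φ t : List ℕ)) :=
          fun t => (Classical.choose_spec (hmem t)).2
        calc mOpen P Dn
            = ∑' x : Σ σ : Cn, {t : Dn // φ t = σ},
                ENNReal.ofReal (strP P (((Equiv.sigmaFiberEquiv φ) x : List ℕ))) :=
              ((Equiv.sigmaFiberEquiv φ).tsum_eq
                (fun t : Dn => ENNReal.ofReal (strP P (t : List ℕ)))).symm
          _ = ∑' (σ : Cn) (t : {t : Dn // φ t = σ}),
                ENNReal.ofReal (strP P ((t : Dn) : List ℕ)) := ENNReal.tsum_sigma' _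
          _ ≤ ∑' σ : Cn, ENNReal.ofReal (strP Q (σ : List ℕ)) := by
              refine ENNReal.tsum_le_tsum fun σ => ?_
              have hσin : strIn Ω' (σ : List ℕ) := hCin (n, (σ : List ℕ)) σ.2
              rw [← stmt17_fiber_sum Ω Ω' P hP X hXdom Q hQ (σ : List ℕ) hσin]
              have hι : Function.Injective
                  (fun t : {t : Dn // φ t = σ} =>
                    (⟨((t : Dn) : List ℕ), by
                        have := hφs (t : Dn)
                        rwa [t.2] at this⟩ :
                      {τ : List ℕ | List.Forall₂ (fun a x => x ∈ X a) τ (σ : List ℕ)})) := by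
                rintro ⟨⟨t, ht⟩, h1⟩ ⟨⟨t', ht'⟩, h2⟩ h
                simp only [Subtype.mk.injEq] at h ⊢
                exact h
              exact ENNReal.tsum_comp_le_tsum_of_injective hι
                (fun τ => ENNReal.ofReal (strP P (τ : List ℕ)))
          _ = mOpen Q Cn := rfl
      exact lt_of_le_of_lt hmeas (hCtest n hn).2
  obtain ⟨n, hn1, hαn⟩ := hrand D hDtest
  refine ⟨n, hn1, ?_⟩
  rintro ⟨m, hm⟩
  refine hαn ⟨m, ⟨pre β m, hm, ?_⟩⟩
  rw [List.forall₂_iff_get]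
  refine ⟨by simp [pre], fun i h1 h2 => ?_⟩
  simp only [pre, List.get_ofFn, List.get_eq_getElem, List.getElem_ofFn]
  exact hβ i
end
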